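/- In a topological semilattice with finite breadth b, the convex hull (generated subsemilattice) of any compact subset A equals the set {x₁ ⊕ ⋯ ⊕ x_b : x₁, …, x_b ∈ A} and is compact. -/

import Mathlib

def IsSubsemilattice {α : Type*} [SemilatticeSup α] (T : Set α) : Prop :=
  ∀ ⦃x⦄, x ∈ T → ∀ ⦃y⦄, y ∈ T → x ⊔ y ∈ T

def semilatticeHull {α : Type*} [SemilatticeSup α] (A : Set α) : Set α :=
  ⋂₀ {T | IsSubsemilattice T ∧ A ⊆ T}

lemma continuous_finset_sup' {S : Type*} [SemilatticeSup S] [TopologicalSpace S]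
    (hcont : Continuous fun p : S × S => p.1 ⊔ p.2)
    {ι : Type*} (t : Finset ι) (ht : t.Nonempty) :
    Continuous fun g : ι → S => t.sup' ht g := by
  induction ht using Finset.Nonempty.cons_induction with
  | singleton a => simpa using continuous_apply a
  | cons a s h hs ih =>
      have heq : (fun g : ι → S => (Finset.cons a s h).sup' (Finset.cons_nonempty h) g)
          = fun g : ι → S => g a ⊔ s.sup' hs g := by
        funext g; exact Finset.sup'_cons hs g
      rw [heq]
      exact hcont.comp ((continuous_apply a).prodMk ih)

/-- In a topological semilattice with finite breadth `b`, the convex hull of a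
compact set `A` equals the set of `b`-fold joins of elements of `A`, and is compact. -/
theorem hull_eq_and_compact_of_finite_breadth {S : Type*} [SemilatticeSup S]
    [TopologicalSpace S] [T2Space S]
    (hcont : Continuous fun p : S × S => p.1 ⊔ p.2)
    (b : ℕ) (hb : 0 < b)
    (hbreadth : ∀ (F : Finset S) (hF : F.Nonempty), ∃ G : Finset S, G ⊆ F ∧
      ∃ hG : G.Nonempty, G.card ≤ b ∧ G.sup' hG id = F.sup' hF id)
    (hleast : ∀ b' < b, ¬ ∀ (F : Finset S) (hF : F.Nonempty), ∃ G : Finset S, G ⊆ F ∧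
      ∃ hG : G.Nonempty, G.card ≤ b' ∧ G.sup' hG id = F.sup' hF id)
    (A : Set S) (hA : IsCompact A) :
    semilatticeHull A =
      {x | ∃ g : Fin b → S, (∀ i, g i ∈ A) ∧
        x = Finset.univ.sup' ⟨⟨0, hb⟩, Finset.mem_univ _⟩ g} ∧
    IsCompact (semilatticeHull A) := by
  classical
  set ne : (Finset.univ : Finset (Fin b)).Nonempty := ⟨⟨0, hb⟩, Finset.mem_univ _⟩
  set B : Set S := {x | ∃ g : Fin b → S, (∀ i, g i ∈ A) ∧
      x = Finset.univ.sup' ne g} with hB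
  -- characterization of B via finite subsets of A
  have hchar : ∀ x : S, x ∈ B ↔
      ∃ (F : Finset S) (hF : F.Nonempty), ↑F ⊆ A ∧ x = F.sup' hF id := by
    intro x
    constructor
    · rintro ⟨g, hg, rfl⟩
      refine ⟨Finset.univ.image g, ⟨g ⟨0, hb⟩, Finset.mem_image_of_mem g (Finset.mem_univ _)⟩,
        ?_, ?_⟩
      · intro y hy
        simp only [Finset.coe_image, Set.mem_image] at hy
        obtain ⟨i, _, rfl⟩ := hy
        exact hg i
      · exact (Finset.sup'_image _ id).symm
    · rintro ⟨F, hF, hFA, rfl⟩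
      obtain ⟨G, hGF, hG, hcard, hsup⟩ := hbreadth F hF
      have hGpos : 0 < G.card := Finset.card_pos.mpr hG
      set g : Fin b → S := fun i =>
        if h : (i : ℕ) < G.card then (G.equivFin.symm ⟨i, h⟩ : S)
        else (G.equivFin.symm ⟨0, hGpos⟩ : S) with hgdef
      have hgG : ∀ i, g i ∈ G := by
        intro i
        rw [hgdef]
        dsimp only
        split <;> exact Finset.coe_mem _
      refine ⟨g, fun i => hFA (hGF (hgG i)), ?_⟩
      rw [← hsup]
      apply le_antisymm
      · apply Finset.sup'_le
        intro y hy
        have hcy : (G.equivFin ⟨y, hy⟩ : ℕ) < b := lt_of_lt_of_le (Fin.is_lt _) hcard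
        have : y = g ⟨(G.equivFin ⟨y, hy⟩ : ℕ), hcy⟩ := by
          rw [hgdef]
          dsimp only
          rw [dif_pos (Fin.is_lt _)]
          have : (⟨(G.equivFin ⟨y, hy⟩ : ℕ), Fin.is_lt _⟩ : Fin G.card)
              = G.equivFin ⟨y, hy⟩ := rfl
          rw [this, Equiv.symm_apply_apply]
        rw [this]
        exact Finset.le_sup' g (Finset.mem_univ _)
      · apply Finset.sup'_le
        intro i _
        exact Finset.le_sup' id (hgG i)
  -- B is a subsemilattice
  have hBsub : IsSubsemilattice B := by
    intro x hx y hy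
    rw [hchar] at hx hy ⊢
    obtain ⟨F, hF, hFA, rfl⟩ := hx
    obtain ⟨F', hF', hFA', rfl⟩ := hy
    refine ⟨F ∪ F', hF.mono Finset.subset_union_left, ?_, ?_⟩
    · intro z hz
      rcases Finset.mem_union.mp hz with h | h
      · exact hFA h
      · exact hFA' h
    · rw [Finset.sup'_union hF hF' id]
  have hAB : A ⊆ B := by
    intro a ha
    exact ⟨fun _ => a, fun _ => ha, (Finset.sup'_const ne a).symm⟩
  -- hull A = B
  have hullA : semilatticeHull A = B := by
    apply le_antisymm
    · exact Set.sInter_subset_of_mem ⟨hBsub, hAB⟩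
    · intro x hx
      obtain ⟨g, hg, rfl⟩ := hx
      intro T hT
      obtain ⟨hTsub, hAT⟩ := hT
      exact Finset.sup'_mem T (fun u hu v hv => hTsub hu hv) _ ne g
        (fun i _ => hAT (hg i))
  refine ⟨hullA, ?_⟩
  rw [hullA]
  have himg : B = (fun g : Fin b → S => Finset.univ.sup' ne g) ''
      (Set.univ.pi fun _ : Fin b => A) := by
    ext x
    simp only [Set.mem_image, Set.mem_pi, Set.mem_univ, forall_true_left, hB, Set.mem_setOf_eq]
    constructor
    · rintro ⟨g, hg, rfl⟩; exact ⟨g, hg, rfl⟩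
    · rintro ⟨g, hg, rfl⟩; exact ⟨g, hg, rfl⟩
  rw [himg]
  exact (isCompact_univ_pi fun _ => hA).image (continuous_finset_sup' hcont _ ne)
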